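/- The function h(t) := 2t - 1 + t(1-t)·(ψ(1+t) - ψ(1)) is strictly monotonically increasing on (0, 1/2), satisfies h(0) = -1 < 0 and h(1/2) > 0, and hence has a unique zero t₀ in (0, 1/2). -/

import Mathlib

/-- The digamma function `ψ = (log ∘ Γ)'`. -/
noncomputable def digamma (x : ℝ) : ℝ := deriv (fun y => Real.log (Real.Gamma y)) x

open Real Set

lemma digamma_diffAux {x : ℝ} (hx : 0 < x) :
    DifferentiableAt ℝ (fun y => Real.log (Real.Gamma y)) x := by
  have hne : ∀ m : ℕ, x ≠ -m := fun m =>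
    ne_of_gt (by have : (0:ℝ) ≤ m := Nat.cast_nonneg m; linarith)
  exact (Real.differentiableAt_Gamma hne).log (Real.Gamma_ne_zero hne)

lemma digamma_hasDerivAt {x : ℝ} (hx : 0 < x) :
    HasDerivAt (fun y => Real.log (Real.Gamma y)) (digamma x) x :=
  (digamma_diffAux hx).hasDerivAt

lemma digamma_monotoneOn : MonotoneOn digamma (Ioi (0:ℝ)) := by
  have := Real.convexOn_log_Gamma.monotoneOn_deriv (fun x hx => digamma_diffAux hx)
  show MonotoneOn (deriv fun y => Real.log (Real.Gamma y)) _
  simpa [Function.comp_def] using this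

lemma digamma_rec {x : ℝ} (hx : 0 < x) : digamma (x + 1) = digamma x + 1 / x := by
  have h_rec : ∀ᶠ y in nhds x, Real.log (Real.Gamma (y + 1))
      = Real.log (Real.Gamma y) + Real.log y := by
    filter_upwards [eventually_gt_nhds hx] with y hy
    rw [Real.Gamma_add_one hy.ne', Real.log_mul hy.ne' (Real.Gamma_pos_of_pos hy).ne', add_comm]
  have h1 : HasDerivAt (fun y => Real.log (Real.Gamma (y + 1))) (digamma (x + 1)) x :=
    HasDerivAt.comp_add_const x 1 (digamma_hasDerivAt (by linarith))
  have h2 : HasDerivAt (fun y => Real.log (Real.Gamma y) + Real.log y)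
      (digamma x + 1 / x) x := by
    rw [one_div]; exact (digamma_hasDerivAt hx).add (Real.hasDerivAt_log hx.ne')
  exact h1.unique (h2.congr_of_eventuallyEq h_rec)

lemma digamma_lt {x y : ℝ} (hx : 0 < x) (hxy : x < y) : digamma x < digamma y := by
  have hy : 0 < y := hx.trans hxy
  have h1 : digamma x + 1 / x = digamma (x + 1) := (digamma_rec hx).symm
  have h2 : digamma (x + 1) ≤ digamma (y + 1) :=
    digamma_monotoneOn (mem_Ioi.2 (by linarith : (0:ℝ) < x + 1))
      (mem_Ioi.2 (by linarith : (0:ℝ) < y + 1)) (by linarith)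
  have h3 : digamma (y + 1) = digamma y + 1 / y := digamma_rec hy
  have h4 : 1 / y < 1 / x := one_div_lt_one_div_of_lt hx hxy
  linarith

lemma digamma_strictMonoOn : StrictMonoOn digamma (Ioi (0:ℝ)) :=
  fun _ hx _ _ hxy => digamma_lt (mem_Ioi.1 hx) hxy

lemma digamma_image_ordConnected : OrdConnected (digamma '' Ioi (0:ℝ)) := by
  have : OrdConnected (deriv (fun y => Real.log (Real.Gamma y)) '' Ioi (0:ℝ)) :=
    (ordConnected_Ioi).image_deriv (fun x hx => digamma_diffAux hx)
  exact this

lemma digamma_continuousAt {a : ℝ} (ha : 0 < a) : ContinuousAt digamma a := by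
  apply digamma_strictMonoOn.continuousAt_of_exists_between (Ioi_mem_nhds ha)
  · intro b hb
    have hx : (0:ℝ) < a / 2 := by linarith
    have hlt : digamma (a / 2) < digamma a := digamma_lt hx (by linarith)
    rcases le_or_gt b (digamma (a / 2)) with hcase | hcase
    · exact ⟨a / 2, mem_Ioi.2 hx, hcase, hlt⟩
    · obtain ⟨c, hc, hcb⟩ := digamma_image_ordConnected.out
        (mem_image_of_mem _ (mem_Ioi.2 hx)) (mem_image_of_mem _ (mem_Ioi.2 ha))
        (mem_Icc.2 ⟨hcase.le, hb.le⟩)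
      exact ⟨c, hc, hcb.ge, hcb.trans_lt hb⟩
  · intro b hb
    have hlt : digamma a < digamma (a + 1) := digamma_lt ha (by linarith)
    rcases le_or_gt (digamma (a + 1)) b with hcase | hcase
    · exact ⟨a + 1, mem_Ioi.2 (by linarith), hlt, hcase⟩
    · obtain ⟨c, hc, hcb⟩ := digamma_image_ordConnected.out
        (mem_image_of_mem _ (mem_Ioi.2 ha)) (mem_image_of_mem _ (mem_Ioi.2 (by linarith)))
        (mem_Icc.2 ⟨hb.le, hcase.le⟩)
      exact ⟨c, hc, by rw [hcb]; exact ⟨hb, le_rfl⟩⟩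

theorem unique_zero_of_h :
    let h : ℝ → ℝ := fun t => 2 * t - 1 + t * (1 - t) * (digamma (1 + t) - digamma 1)
    StrictMonoOn h (Set.Ioo (0:ℝ) (1/2)) ∧
    h 0 = -1 ∧
    0 < h (1/2) ∧
    ∃! t₀ : ℝ, t₀ ∈ Set.Ioo (0:ℝ) (1/2) ∧ h t₀ = 0 := by
  intro h
  have hg : ∀ t : ℝ, 0 ≤ t → 0 ≤ digamma (1 + t) - digamma 1 := by
    intro t ht
    have := digamma_monotoneOn (mem_Ioi.2 one_pos)
      (mem_Ioi.2 (by linarith : (0:ℝ) < 1 + t)) (by linarith)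
    linarith
  have hmono : StrictMonoOn h (Set.Ioo (0:ℝ) (1/2)) := by
    intro s hs t ht hst
    obtain ⟨hs0, hs1⟩ := hs
    obtain ⟨ht0, ht1⟩ := ht
    have hgm : digamma (1 + s) - digamma 1 ≤ digamma (1 + t) - digamma 1 := by
      have := digamma_monotoneOn (mem_Ioi.2 (by linarith : (0:ℝ) < 1 + s))
        (mem_Ioi.2 (by linarith : (0:ℝ) < 1 + t)) (by linarith)
      linarith
    have hp : s * (1 - s) ≤ t * (1 - t) := by nlinarith
    have hpg : s * (1 - s) * (digamma (1 + s) - digamma 1)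
        ≤ t * (1 - t) * (digamma (1 + t) - digamma 1) := by
      have h1 : s * (1 - s) * (digamma (1 + s) - digamma 1)
          ≤ t * (1 - t) * (digamma (1 + s) - digamma 1) :=
        mul_le_mul_of_nonneg_right hp (hg s hs0.le)
      have h2 : t * (1 - t) * (digamma (1 + s) - digamma 1)
          ≤ t * (1 - t) * (digamma (1 + t) - digamma 1) :=
        mul_le_mul_of_nonneg_left hgm (by nlinarith)
      linarith
    show 2 * s - 1 + _ < 2 * t - 1 + _
    linarith
  have h0 : h 0 = -1 := by simp [h]
  have hhalf : 0 < h (1/2) := by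
    have : digamma 1 < digamma (1 + 1/2) := digamma_lt one_pos (by norm_num)
    simp only [h]
    nlinarith
  refine ⟨hmono, h0, hhalf, ?_⟩
  have hcont : ContinuousOn h (Set.Icc 0 (1/2)) := by
    have hd : ContinuousOn (fun t => digamma (1 + t)) (Set.Icc (0:ℝ) (1/2)) := by
      intro t ht
      exact ((digamma_continuousAt (by obtain ⟨h1, h2⟩ := ht; linarith)).comp
        (by fun_prop : ContinuousAt (fun t : ℝ => 1 + t) t)).continuousWithinAt
    fun_prop
  have h0' : h 0 < 0 := by rw [h0]; norm_num
  obtain ⟨t₀, ht₀, ht₀0⟩ : ∃ t₀ ∈ Set.Ioo (0:ℝ) (1/2), h t₀ = 0 := by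
    obtain ⟨c, hc, hc0⟩ :=
      intermediate_value_Ioo (by norm_num : (0:ℝ) ≤ 1/2) hcont ⟨h0', hhalf⟩
    exact ⟨c, hc, hc0⟩
  refine ⟨t₀, ⟨ht₀, ht₀0⟩, ?_⟩
  rintro t ⟨ht, ht0⟩
  by_contra hne
  rcases lt_or_gt_of_ne hne with hlt | hlt
  · have := hmono ht ht₀ hlt; rw [ht0, ht₀0] at this; exact lt_irrefl _ this
  · have := hmono ht₀ ht hlt; rw [ht0, ht₀0] at this; exact lt_irrefl _ this
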